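/- Let B be a Boolean subalgebra of 𝒫(ω₁) that contains every initial segment {β : β < α} for α < ω₁, and suppose that for every a ⊆ ω₁ the set {b ∈ B : b ⊆ a} has a countable cofinal subset. Then for every a ⊆ ω₁ there is a countable set C ⊆ {b ∈ B : b ⊆ a} such that for every b ∈ B with b \ a countable there exists c ∈ C with b \ c countable. (That is, the image of B is σ-embedded in the quotient of 𝒫(ω₁) by the ideal of countable sets, in the downward direction.) -/

import Mathlib

open Set Cardinal

theorem quotient_sigma_embedded_of_sigma_embedded
    (B : Set (Set {α : Ordinal // α < (Cardinal.aleph 1).ord}))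
    (hbot : ∅ ∈ B) (htop : Set.univ ∈ B)
    (hsup : ∀ a ∈ B, ∀ b ∈ B, a ∪ b ∈ B) (hinf : ∀ a ∈ B, ∀ b ∈ B, a ∩ b ∈ B)
    (hcompl : ∀ a ∈ B, aᶜ ∈ B)
    (hinit : ∀ α : {α : Ordinal // α < (Cardinal.aleph 1).ord},
      {β : {α : Ordinal // α < (Cardinal.aleph 1).ord} | β < α} ∈ B)
    (hσ : ∀ a : Set {α : Ordinal // α < (Cardinal.aleph 1).ord},
      ∃ C ⊆ {b ∈ B | b ⊆ a}, C.Countable ∧ ∀ b ∈ B, b ⊆ a → ∃ c ∈ C, b ⊆ c) :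
    ∀ a : Set {α : Ordinal // α < (Cardinal.aleph 1).ord},
      ∃ C ⊆ {b ∈ B | b ⊆ a}, C.Countable ∧
        ∀ b ∈ B, (b \ a).Countable → ∃ c ∈ C, (b \ c).Countable := by
  intro a
  obtain ⟨C, hCsub, hCcount, hCcof⟩ := hσ a
  refine ⟨C, hCsub, hCcount, ?_⟩
  intro b hb hba
  -- find a bound α for b \ a
  have hbound : ∃ α : {α : Ordinal // α < (Cardinal.aleph 1).ord},
      ∀ x ∈ b \ a, x < α := by
    rcases Set.eq_empty_or_nonempty (b \ a) with h | h
    · exact ⟨⟨0, (Cardinal.isSuccLimit_ord (Cardinal.aleph0_le_aleph 1)).pos⟩, by simp [h]⟩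
    · obtain ⟨g, hg⟩ := hba.exists_surjective h
      set f : ULift ℕ → Ordinal := fun n => Order.succ (g n.down).1.1 with hf
      have hαlt : iSup f < (Cardinal.aleph 1).ord := by
        apply Ordinal.iSup_lt_ord
        · rw [Cardinal.isRegular_aleph_one.cof_eq]
          exact lt_of_le_of_lt Cardinal.mk_le_aleph0 Cardinal.aleph0_lt_aleph_one
        · intro i
          exact (Cardinal.isSuccLimit_ord (Cardinal.aleph0_le_aleph 1)).succ_lt (g i.down).1.2
      refine ⟨⟨iSup f, hαlt⟩, ?_⟩
      intro x hx
      rw [← Subtype.coe_lt_coe]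
      obtain ⟨n, hn⟩ := hg ⟨x, hx⟩
      have h1 : x.1 < f ⟨n⟩ := by
        rw [hf]
        simp only [hn]
        exact Order.lt_succ _
      exact lt_of_lt_of_le h1 (Ordinal.le_iSup f ⟨n⟩)
  obtain ⟨α, hα⟩ := hbound
  set I : Set {α : Ordinal // α < (Cardinal.aleph 1).ord} := {β | β < α} with hI
  have hIcount : I.Countable := by
    have h1 : Countable (Set.Iio α.1) := by
      rw [← Cardinal.mk_le_aleph0_iff]
      rw [Ordinal.mk_Iio_ordinal α.1]
      have h2 : α.1.card ≤ ℵ₀ := by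
        have h3 := Cardinal.lt_ord.1 α.2
        exact Order.lt_succ_iff.1 (by rw [Cardinal.succ_aleph0]; exact h3)
      exact (Cardinal.lift_le.2 h2).trans_eq Cardinal.lift_aleph0
    rw [← Set.countable_coe_iff]
    exact (Function.Injective.countable (f := fun β : I => (⟨β.1.1, β.2⟩ : Set.Iio α.1))
      (fun x y hxy => Subtype.ext (Subtype.ext (by
        simpa using congrArg Subtype.val hxy))))
  have hbI : b ∩ Iᶜ ∈ B := hinf b hb Iᶜ (hcompl I (hinit α))
  have hsub : b ∩ Iᶜ ⊆ a := by
    intro x hx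
    by_contra hxa
    exact hx.2 (hα x ⟨hx.1, hxa⟩)
  obtain ⟨c, hc, hcc⟩ := hCcof (b ∩ Iᶜ) hbI hsub
  refine ⟨c, hc, hIcount.mono ?_⟩
  intro x hx
  by_contra hxI
  exact hx.2 (hcc ⟨hx.1, hxI⟩)
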